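/- Let q be an element of the closure of 𝒰 not belonging to 𝒰, with quasi-greedy q-expansion (α_i) = (α_1 … α_k)^∞ purely periodic with period k, and let m ≥ k be an integer satisfying (α_1 − α_{j+1}) … (α_1 − α_m) < α_1 … α_{m−j} lexicographically for all 0 ≤ j < m. For each positive integer N with kN ≥ m, let q_N > 1 be the unique real number satisfying ∑_{i=1}^∞ γ_i^N q_N^{-i} = 1, where (γ_i^N) = (α_1 … α_k)^N (α_1 … α_m (α_1 − α_1) … (α_1 − α_m))^∞. Then q_N → q as N → ∞. -/
import Mathlib


/-- `c` is a `q`-expansion: a sequence of nonnegative integers with `c i ≤ q`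
(we index from 0, so `c i` stands for the digit `c_{i+1}` of the paper)
such that `∑_{i≥1} c_i q^{-i} = 1`. -/
def IsExpansion (q : ℝ) (c : ℕ → ℕ) : Prop :=
  (∀ i, (c i : ℝ) ≤ q) ∧ ∑' i : ℕ, (c i : ℝ) / q ^ (i + 1) = 1

/-- The set `𝒰` of univoque numbers: real numbers `q ≥ 1` admitting exactly one
`q`-expansion. -/
def UnivoqueSet : Set ℝ := {q | 1 ≤ q ∧ ∃! c : ℕ → ℕ, IsExpansion q c}

/-- `γ` is the greedy `q`-expansion: for every `n`, `γ n` is the largest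
nonnegative integer `k` such that `(∑_{i<n} γ i / q^(i+1)) + k / q^(n+1) ≤ 1`. -/
def IsGreedy (q : ℝ) (γ : ℕ → ℕ) : Prop :=
  ∀ n : ℕ, IsGreatest
    {k : ℕ | (∑ i ∈ Finset.range n, (γ i : ℝ) / q ^ (i + 1)) + (k : ℝ) / q ^ (n + 1) ≤ 1} (γ n)

/-- `α` is the quasi-greedy `q`-expansion: for every `n`, `α n` is the largest
nonnegative integer `k` such that `(∑_{i<n} α i / q^(i+1)) + k / q^(n+1) < 1`. -/
def IsQuasiGreedy (q : ℝ) (α : ℕ → ℕ) : Prop :=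
  ∀ n : ℕ, IsGreatest
    {k : ℕ | (∑ i ∈ Finset.range n, (α i : ℝ) / q ^ (i + 1)) + (k : ℝ) / q ^ (n + 1) < 1} (α n)

/-- Strict lexicographic order on sequences of nonnegative integers. -/
def LexLT (a b : ℕ → ℕ) : Prop := ∃ n : ℕ, (∀ i < n, a i = b i) ∧ a n < b n

/-- Lexicographic order on sequences of nonnegative integers. -/
def LexLE (a b : ℕ → ℕ) : Prop := LexLT a b ∨ a = b

/-- Strict lexicographic order on finite words of length `n`
(given as functions on the first `n` indices). -/
def WordLT (n : ℕ) (a b : ℕ → ℕ) : Prop := ∃ i < n, (∀ j < i, a j = b j) ∧ a i < b i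

lemma summable_digits {x : ℝ} (hx : 1 < x) {M : ℕ} {c : ℕ → ℕ} (hc : ∀ i, c i ≤ M) :
    Summable (fun i : ℕ => (c i : ℝ) / x ^ (i + 1)) := by
  have hx0 : (0:ℝ) < x := lt_trans one_pos hx
  have h1 : (1:ℝ)/x < 1 := by rw [div_lt_one hx0]; exact hx
  have h0 : (0:ℝ) ≤ 1/x := by positivity
  have hg : Summable (fun i : ℕ => (M:ℝ) * (1/x)^i) :=
    (summable_geometric_of_lt_one h0 h1).mul_left _
  refine Summable.of_nonneg_of_le (fun i => by positivity) (fun i => ?_) hg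
  have hci : (c i : ℝ) ≤ M := by exact_mod_cast hc i
  calc (c i : ℝ) / x ^ (i+1) ≤ (M:ℝ) / x^(i+1) := by gcongr
    _ ≤ (M:ℝ) / x^i := by gcongr <;> [exact hx.le; omega]
    _ = (M:ℝ) * (1/x)^i := by rw [div_pow, one_pow]; ring

lemma F_anti {x y : ℝ} (hx : 1 < x) (hxy : x ≤ y) {M : ℕ} {c : ℕ → ℕ} (hc : ∀ i, c i ≤ M) :
    ∑' i : ℕ, (c i:ℝ)/y^(i+1) ≤ ∑' i : ℕ, (c i:ℝ)/x^(i+1) := by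
  have hx0 : (0:ℝ) < x := lt_trans one_pos hx
  refine Summable.tsum_le_tsum (fun i => ?_) (summable_digits (lt_of_lt_of_le hx hxy) hc)
    (summable_digits hx hc)
  gcongr

lemma geom_tail {x : ℝ} (hx : 1 < x) : ∑' j : ℕ, (1/x)^(j+1) = 1/(x-1) := by
  have hx0 : (0:ℝ) < x := lt_trans one_pos hx
  have hr0 : (0:ℝ) ≤ 1/x := by positivity
  have hr1 : 1/x < 1 := by rw [div_lt_one hx0]; exact hx
  have hx1 : x - 1 ≠ 0 := by linarith
  calc ∑' j : ℕ, (1/x)^(j+1) = ∑' j : ℕ, (1/x) * (1/x)^j := tsum_congr (fun j => by ring)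
    _ = (1/x) * ∑' j : ℕ, (1/x)^j := tsum_mul_left
    _ = (1/x) * (1 - 1/x)⁻¹ := by rw [tsum_geometric_of_lt_one hr0 hr1]
    _ = 1/(x-1) := by
        have : 1 - 1/x ≠ 0 := by
          rw [sub_ne_zero]; intro h; rw [← h] at hr1; exact lt_irrefl _ hr1
        field_simp

lemma tail_bound {x : ℝ} (hx : 1 < x) {M : ℕ} {c d : ℕ → ℕ} (hc : ∀ i, c i ≤ M)
    (hd : ∀ i, d i ≤ M) {n : ℕ} (hagree : ∀ i < n, c i = d i) :
    |(∑' i : ℕ, (c i:ℝ)/x^(i+1)) - ∑' i : ℕ, (d i:ℝ)/x^(i+1)| ≤ (M:ℝ) / (x^n * (x-1)) := by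
  have hx0 : (0:ℝ) < x := lt_trans one_pos hx
  have hsc := summable_digits hx hc
  have hsd := summable_digits hx hd
  set e : ℕ → ℝ := fun i => (c i:ℝ)/x^(i+1) - (d i:ℝ)/x^(i+1) with he
  have hse : Summable e := hsc.sub hsd
  have h1 : (∑' i : ℕ, (c i:ℝ)/x^(i+1)) - ∑' i : ℕ, (d i:ℝ)/x^(i+1) = ∑' i, e i :=
    (Summable.tsum_sub hsc hsd).symm
  rw [h1]
  have h2 : ∑' i, e i = ∑' i, e (i + n) := by
    rw [← Summable.sum_add_tsum_nat_add n hse]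
    have hz : ∑ i ∈ Finset.range n, e i = 0 := Finset.sum_eq_zero (fun i hi => by
      simp [he, hagree i (Finset.mem_range.mp hi)])
    rw [hz, zero_add]
  rw [h2]
  have hse' : Summable (fun j => e (j + n)) := (summable_nat_add_iff n).mpr hse
  have hbound : ∀ j : ℕ, |e (j + n)| ≤ (M:ℝ)/x^n * (1/x)^(j+1) := by
    intro j
    have hcn : (c (j+n) : ℝ) ≤ M := by exact_mod_cast hc (j+n)
    have hdn : (d (j+n) : ℝ) ≤ M := by exact_mod_cast hd (j+n)
    have hc0 : (0:ℝ) ≤ (c (j+n) : ℝ) := Nat.cast_nonneg _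
    have hd0 : (0:ℝ) ≤ (d (j+n) : ℝ) := Nat.cast_nonneg _
    have habs : |(c (j+n):ℝ) - (d (j+n):ℝ)| ≤ M := by
      rw [abs_sub_le_iff]; constructor <;> linarith
    have heq : e (j+n) = ((c (j+n):ℝ) - d (j+n)) / x^(j+n+1) := by
      rw [he]; ring_nf
    have hpow : (M:ℝ)/x^n * (1/x)^(j+1) = (M:ℝ)/x^(j+n+1) := by
      rw [div_pow, one_pow]
      rw [div_mul_div_comm, mul_one]
      congr 1
      rw [← pow_add]
      ring_nf
    rw [heq, hpow, abs_div, abs_of_pos (pow_pos hx0 _)]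
    gcongr
  have hr0 : (0:ℝ) ≤ 1/x := by positivity
  have hr1 : 1/x < 1 := by rw [div_lt_one hx0]; exact hx
  have hsg : Summable (fun j : ℕ => (1/x)^(j+1)) := by
    refine ((summable_geometric_of_lt_one hr0 hr1).mul_left (1/x)).congr (fun j => by ring)
  have hsb : Summable (fun j : ℕ => (M:ℝ)/x^n * (1/x)^(j+1)) := hsg.mul_left _
  have habsstep : |∑' j : ℕ, e (j + n)| ≤ ∑' j : ℕ, |e (j + n)| := by
    have h := norm_tsum_le_tsum_norm (f := fun j : ℕ => e (j + n))
      (by simpa only [Real.norm_eq_abs] using hse'.abs)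
    simpa only [Real.norm_eq_abs] using h
  calc |∑' j : ℕ, e (j + n)| ≤ ∑' j : ℕ, |e (j + n)| := habsstep
    _ ≤ ∑' j : ℕ, (M:ℝ)/x^n * (1/x)^(j+1) := Summable.tsum_le_tsum hbound hse'.abs hsb
    _ = (M:ℝ)/x^n * ∑' j : ℕ, (1/x)^(j+1) := tsum_mul_left
    _ = (M:ℝ)/x^n * (1/(x-1)) := by rw [geom_tail hx]
    _ = (M:ℝ)/(x^n * (x-1)) := by rw [div_mul_div_comm, mul_one]


set_option maxHeartbeats 1600000 in
/-- The numbers `q_N` determined by the constructed sequences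
`(γ_i^N) = (α_1…α_k)^N (α_1…α_m (α_1-α_1)…(α_1-α_m))^∞`
converge to `q` as `N → ∞`. -/
theorem constructed_numbers_tendsto (q : ℝ)
    (hq : q ∈ closure UnivoqueSet \ UnivoqueSet)
    (α : ℕ → ℕ) (hα : IsQuasiGreedy q α)
    (k : ℕ) (hk : 1 ≤ k) (hper : ∀ i, α (i + k) = α i)
    (m : ℕ) (hm : k ≤ m)
    (hword : ∀ j < m, WordLT (m - j) (fun i => α 0 - α (j + i)) α)
    (γ : ℕ → ℕ → ℕ)
    (hγ : ∀ N i : ℕ, γ N i =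
      if i < k * N then α (i % k)
      else if (i - k * N) % (2 * m) < m then α ((i - k * N) % (2 * m))
      else α 0 - α ((i - k * N) % (2 * m) - m))
    (Q : ℕ → ℝ)
    (hQ : ∀ N : ℕ, 1 ≤ N → m ≤ k * N →
      1 < Q N ∧ ∑' i : ℕ, (γ N i : ℝ) / (Q N) ^ (i + 1) = 1) :
    Filter.Tendsto Q Filter.atTop (nhds q) := by
  classical
  -- q ≥ 1
  have hq1 : 1 ≤ q := by
    have hsub : closure UnivoqueSet ⊆ Set.Ici 1 :=
      closure_minimal (fun x hx => hx.1) isClosed_Ici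
    exact hsub hq.1
  -- a positive digit exists
  obtain ⟨i0, hi0m, -, hi0⟩ := hword 0 (by omega)
  simp only [zero_add] at hi0
  have hi0pos : 1 ≤ α i0 := by omega
  -- q > 1
  have hqgt : 1 < q := by
    rcases lt_or_eq_of_le hq1 with h | h
    · exact h
    · exfalso
      have h' : q = 1 := h.symm
      subst h'
      have hzero : ∀ n, α n = 0 := by
        intro n
        induction n using Nat.strong_induction_on with
        | _ n ih =>
          have hmem := (hα n).1
          simp only [Set.mem_setOf_eq, one_pow, div_one] at hmem
          have hs : ∑ i ∈ Finset.range n, (α i : ℝ) / 1 ^ (i+1) = 0 := by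
            apply Finset.sum_eq_zero
            intro i hi
            rw [ih i (Finset.mem_range.mp hi)]
            simp
          simp only [one_pow, div_one] at hs
          rw [hs, zero_add] at hmem
          exact_mod_cast Nat.lt_one_iff.mp (by exact_mod_cast hmem)
      have := hzero i0
      omega
  have hq0 : (0:ℝ) < q := by linarith
  set P : ℕ → ℝ := fun n => ∑ i ∈ Finset.range n, (α i : ℝ)/q^(i+1) with hPdef
  have hmem : ∀ n, P n + (α n : ℝ)/q^(n+1) < 1 := fun n => (hα n).1
  have hub : ∀ n, (1:ℝ) ≤ P n + ((α n : ℝ)+1)/q^(n+1) := by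
    intro n
    by_contra hcon
    push_neg at hcon
    have hmem' : (α n + 1) ∈ {j : ℕ | (∑ i ∈ Finset.range n, (α i : ℝ) / q ^ (i + 1))
        + (j : ℝ) / q ^ (n + 1) < 1} := by
      simp only [Set.mem_setOf_eq]
      push_cast
      exact hcon
    have := (hα n).2 hmem'
    omega
  have hPsucc : ∀ n, P (n+1) = P n + (α n:ℝ)/q^(n+1) := fun n => Finset.sum_range_succ _ _
  have hPlt : ∀ n, P n < 1 := by
    intro n
    cases n with
    | zero => simp [hPdef]
    | succ n => rw [hPsucc]; exact hmem n
  have key : ∀ n, (1:ℝ) ≤ P n + 1/q^n := by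
    intro n
    cases n with
    | zero => simp [hPdef]
    | succ n =>
      have h1 := hub n
      have h2 : ((α n:ℝ)+1)/q^(n+1) = (α n:ℝ)/q^(n+1) + 1/q^(n+1) := by ring
      rw [hPsucc]
      linarith [h1, h2.symm.le]
  -- digit bound
  have hdig : ∀ n, α n ≤ α 0 := by
    intro n
    have h1 : (α n:ℝ)/q^(n+1) < 1/q^n := by
      have := hmem n; have := key n; linarith
    have h2 : (α n : ℝ) < q := by
      have hp : (0:ℝ) < q^n := pow_pos hq0 n
      have hp1 : (0:ℝ) < q^(n+1) := pow_pos hq0 (n+1)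
      rw [div_lt_div_iff₀ hp1 hp] at h1
      have h3 : (α n:ℝ) * q^n < q * q^n := by
        rw [pow_succ] at h1
        nlinarith [h1]
      exact lt_of_mul_lt_mul_right h3 hp.le
    have h3 : q ≤ (α 0:ℝ) + 1 := by
      have h4 := hub 0
      simp only [hPdef, Finset.range_zero, Finset.sum_empty, zero_add, pow_one] at h4
      rw [le_div_iff₀ hq0] at h4
      linarith
    have h5 : α n < α 0 + 1 := by exact_mod_cast lt_of_lt_of_le h2 h3
    omega
  have hsum_q : Summable (fun i : ℕ => (α i:ℝ)/q^(i+1)) := summable_digits hqgt hdig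
  -- tsum at q equals 1
  have htsum_q : ∑' i : ℕ, (α i:ℝ)/q^(i+1) = 1 := by
    have hr1 : 1/q < 1 := by rw [div_lt_one hq0]; exact hqgt
    have hgeo : Filter.Tendsto (fun n:ℕ => (1/q)^n) Filter.atTop (nhds 0) :=
      tendsto_pow_atTop_nhds_zero_of_lt_one (by positivity) hr1
    have h0 : Filter.Tendsto (fun n:ℕ => 1 - (1/q)^n) Filter.atTop (nhds 1) := by
      have := tendsto_const_nhds (α := ℕ) (x := (1:ℝ)) |>.sub hgeo
      simpa using this
    have hlim : Filter.Tendsto P Filter.atTop (nhds 1) := by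
      refine tendsto_of_tendsto_of_tendsto_of_le_of_le h0 tendsto_const_nhds
        (fun n => ?_) (fun n => (hPlt n).le)
      have := key n
      have hpow : (1/q)^n = 1/q^n := by rw [div_pow, one_pow]
      rw [hpow]
      linarith
    exact (hsum_q.hasSum_iff_tendsto_nat.mpr hlim).tsum_eq
  -- periodicity in mod form
  have hmod : ∀ i, α i = α (i % k) := by
    intro i
    induction i using Nat.strong_induction_on with
    | _ i ih =>
      rcases lt_or_ge i k with h | h
      · rw [Nat.mod_eq_of_lt h]
      · have h1 : i = (i - k) + k := by omega
        rw [h1, hper (i-k), Nat.add_mod_right]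
        exact ih (i-k) (by omega)
  have hγeq : ∀ N, ∀ i < k*N, γ N i = α i := by
    intro N i hi
    rw [hγ, if_pos hi, ← hmod]
  have hγbd : ∀ N i, γ N i ≤ α 0 := by
    intro N i
    rw [hγ]
    split
    · exact hdig _
    · split
      · exact hdig _
      · omega
  -- main ε argument
  rw [Metric.tendsto_atTop]
  intro ε hε
  set ε' := min ε ((q-1)/2) with hε'def
  have hε'pos : 0 < ε' := lt_min hε (by linarith)
  have hε'le : ε' ≤ ε := min_le_left _ _
  have hε'half : ε' ≤ (q-1)/2 := min_le_right _ _
  set x₁ := q - ε' with hx₁def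
  set x₂ := q + ε' with hx₂def
  have hx₁1 : 1 < x₁ := by rw [hx₁def]; linarith
  have hx₂1 : 1 < x₂ := by rw [hx₂def]; linarith
  have hx₁q : x₁ < q := by rw [hx₁def]; linarith
  have hqx₂ : q < x₂ := by rw [hx₂def]; linarith
  have hx₁0 : (0:ℝ) < x₁ := by linarith
  have hsum₁ : Summable (fun i : ℕ => (α i:ℝ)/x₁^(i+1)) := summable_digits hx₁1 hdig
  have hsum₂ : Summable (fun i : ℕ => (α i:ℝ)/x₂^(i+1)) := summable_digits hx₂1 hdig
  have hi0cast : (0:ℝ) < (α i0 : ℝ) := by exact_mod_cast hi0pos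
  have hδ1 : 1 < ∑' i : ℕ, (α i:ℝ)/x₁^(i+1) := by
    rw [← htsum_q]
    refine Summable.tsum_lt_tsum (i := i0) (fun b => ?_) ?_ hsum_q hsum₁
    · gcongr
    · apply div_lt_div_of_pos_left hi0cast (pow_pos hx₁0 _)
      exact pow_lt_pow_left₀ hx₁q hx₁0.le (by omega)
  have hδ2 : ∑' i : ℕ, (α i:ℝ)/x₂^(i+1) < 1 := by
    rw [← htsum_q]
    refine Summable.tsum_lt_tsum (i := i0) (fun b => ?_) ?_ hsum₂ hsum_q
    · gcongr
    · apply div_lt_div_of_pos_left hi0cast (pow_pos hq0 _)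
      exact pow_lt_pow_left₀ hqx₂ hq0.le (by omega)
  set δ := min ((∑' i : ℕ, (α i:ℝ)/x₁^(i+1)) - 1) (1 - ∑' i : ℕ, (α i:ℝ)/x₂^(i+1)) with hδdef
  have hδpos : 0 < δ := lt_min (by linarith) (by linarith)
  -- eventual bound
  have hkN : Filter.Tendsto (fun N : ℕ => k * N) Filter.atTop Filter.atTop := by
    refine Filter.tendsto_atTop_atTop.mpr (fun b => ⟨b, fun n hn => ?_⟩)
    calc b ≤ n := hn
      _ ≤ k * n := Nat.le_mul_of_pos_left n hk
  have hpowinf : Filter.Tendsto (fun N : ℕ => x₁^(k*N)) Filter.atTop Filter.atTop :=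
    (tendsto_pow_atTop_atTop_of_one_lt hx₁1).comp hkN
  have hdenominf : Filter.Tendsto (fun N : ℕ => x₁^(k*N) * (x₁-1)) Filter.atTop Filter.atTop :=
    hpowinf.atTop_mul_const (by linarith)
  have hB : Filter.Tendsto (fun N : ℕ => (α 0 : ℝ)/(x₁^(k*N) * (x₁-1))) Filter.atTop (nhds 0) :=
    Filter.Tendsto.div_atTop tendsto_const_nhds hdenominf
  have hBev : ∀ᶠ N in Filter.atTop, (α 0 : ℝ)/(x₁^(k*N) * (x₁-1)) < δ :=
    hB.eventually (gt_mem_nhds hδpos)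
  have hgev : ∀ᶠ N in Filter.atTop, max 1 m ≤ N := Filter.eventually_ge_atTop _
  obtain ⟨N0, hN0⟩ := Filter.eventually_atTop.mp (hBev.and hgev)
  refine ⟨N0, fun N hN => ?_⟩
  obtain ⟨hBlt, hNge⟩ := hN0 N hN
  have hN1 : 1 ≤ N := le_trans (le_max_left _ _) hNge
  have hmN : m ≤ k * N := le_trans (le_trans (le_max_right _ _) hNge) (Nat.le_mul_of_pos_left N hk)
  obtain ⟨hQN1, hQNsum⟩ := hQ N hN1 hmN
  -- tail bounds
  have htb₁ : |(∑' i : ℕ, (γ N i:ℝ)/x₁^(i+1)) - ∑' i : ℕ, (α i:ℝ)/x₁^(i+1)|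
      ≤ (α 0:ℝ) / (x₁^(k*N) * (x₁-1)) :=
    tail_bound hx₁1 (hγbd N) hdig (hγeq N)
  have htb₂ : |(∑' i : ℕ, (γ N i:ℝ)/x₂^(i+1)) - ∑' i : ℕ, (α i:ℝ)/x₂^(i+1)|
      ≤ (α 0:ℝ) / (x₂^(k*N) * (x₂-1)) :=
    tail_bound hx₂1 (hγbd N) hdig (hγeq N)
  have hcmp : (α 0:ℝ) / (x₂^(k*N) * (x₂-1)) ≤ (α 0:ℝ) / (x₁^(k*N) * (x₁-1)) := by
    apply div_le_div_of_nonneg_left (Nat.cast_nonneg _)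
    · exact mul_pos (pow_pos hx₁0 _) (by linarith)
    · exact mul_le_mul (pow_le_pow_left₀ hx₁0.le (by linarith) _) (by linarith)
        (by linarith) (pow_nonneg (by linarith) _)
  -- Q N < x₂
  have hup : Q N < x₂ := by
    by_contra hcon
    push_neg at hcon
    have h1 : ∑' i : ℕ, (γ N i:ℝ)/(Q N)^(i+1) ≤ ∑' i : ℕ, (γ N i:ℝ)/x₂^(i+1) :=
      F_anti hx₂1 hcon (hγbd N)
    have h2 : ∑' i : ℕ, (γ N i:ℝ)/x₂^(i+1) < ∑' i : ℕ, (α i:ℝ)/x₂^(i+1) + δ := by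
      have habs := abs_le.mp htb₂
      have hδle : δ ≤ 1 - ∑' i : ℕ, (α i:ℝ)/x₂^(i+1) := min_le_right _ _
      nlinarith [habs.2, lt_of_le_of_lt hcmp hBlt]
    have hδle : δ ≤ 1 - ∑' i : ℕ, (α i:ℝ)/x₂^(i+1) := min_le_right _ _
    rw [hQNsum] at h1
    linarith
  -- x₁ < Q N
  have hlow : x₁ < Q N := by
    by_contra hcon
    push_neg at hcon
    have h1 : ∑' i : ℕ, (γ N i:ℝ)/x₁^(i+1) ≤ ∑' i : ℕ, (γ N i:ℝ)/(Q N)^(i+1) :=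
      F_anti hQN1 hcon (hγbd N)
    have habs := abs_le.mp htb₁
    have hδle : δ ≤ (∑' i : ℕ, (α i:ℝ)/x₁^(i+1)) - 1 := min_le_left _ _
    rw [hQNsum] at h1
    linarith [habs.1, hBlt]
  rw [Real.dist_eq, abs_lt]
  constructor
  · rw [hx₁def] at hlow; linarith
  · rw [hx₂def] at hup; linarith
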